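/- For probability mass functions p, p_r on a finite set with p absolutely continuous w.r.t. p_r, and any nonnegative function X, Σ_s |p(s) − p_r(s)| X(s) ≤ sqrt(d_{KL}(p, p_r)) · sqrt((4/3) E_{p_r}[X²] + (2/3) E_p[X²]), where d_{KL}(p, p_r) = Σ_{s: p_r(s)>0} p(s) log(p(s)/p_r(s)). -/

import Mathlib

open Real Set

-- g(x) = (x+1) log x - 2(x-1) is monotone on (0,∞)
lemma my_g_mono : MonotoneOn (fun x : ℝ => (x+1) * Real.log x - 2*(x-1)) (Set.Ioi 0) := by
  have hd : ∀ x ∈ interior (Set.Ioi (0:ℝ)), 0 ≤ deriv (fun x : ℝ => (x+1) * Real.log x - 2*(x-1)) x := by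
    intro x hx
    rw [interior_Ioi] at hx
    have hx0 : (0:ℝ) < x := hx
    have h1 : HasDerivAt (fun x : ℝ => (x+1) * Real.log x - 2*(x-1))
        ((1) * Real.log x + (x+1) * (1/x) - 2) x := by
      have := ((hasDerivAt_id x).add_const 1).mul (Real.hasDerivAt_log hx0.ne')
      exact (this.sub (((hasDerivAt_id x).sub_const 1).const_mul 2)).congr_deriv (by simp)
    rw [h1.deriv]
    have hlog : 1 - x⁻¹ ≤ Real.log x := by
      have := Real.log_le_sub_one_of_pos (x := x⁻¹) (by positivity)
      rw [Real.log_inv] at this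
      linarith
    have : (x+1) * (1/x) = 1 + 1/x := by field_simp
    rw [this]
    have : (1:ℝ)/x = x⁻¹ := one_div x
    linarith
  apply monotoneOn_of_deriv_nonneg (convex_Ioi 0) _ _ hd
  · exact (Continuous.continuousOn (by continuity)).mul (Real.continuousOn_log.mono (by intro x hx; exact ne_of_gt hx)) |>.sub (Continuous.continuousOn (by continuity))
  · intro x hx
    rw [interior_Ioi] at hx
    exact (((hasDerivAt_id x).add_const 1).mul (Real.hasDerivAt_log (ne_of_gt hx))).sub
      (((hasDerivAt_id x).sub_const 1).const_mul 2) |>.differentiableAt.differentiableWithinAt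

-- key: for x > 0, (x-1)(5x+1) ≤ 2x(x+2) log x
lemma my_key_log {x : ℝ} (hx : 0 < x) :
    (x - 1) * (5*x + 1) ≤ 2*x*(x+2) * Real.log x := by
  set h : ℝ → ℝ := fun x => 2*x*(x+2) * Real.log x - (x-1)*(5*x+1) with hh
  have hg1 : ((1:ℝ)+1) * Real.log 1 - 2*(1-1) = 0 := by simp
  have hderiv : ∀ y : ℝ, 0 < y → HasDerivAt h (4 * ((y+1) * Real.log y - 2*(y-1))) y := by
    intro y hy
    have h1 : HasDerivAt (fun y : ℝ => 2*y*(y+2) * Real.log y)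
        ((2*(y+2) + 2*y) * Real.log y + 2*y*(y+2) * (1/y)) y := by
      have ha : HasDerivAt (fun y : ℝ => 2*y*(y+2)) (2*(y+2) + 2*y) y := by
        have := (((hasDerivAt_id y).const_mul 2).mul ((hasDerivAt_id y).add_const 2))
        exact this.congr_deriv (by simp <;> ring)
      exact (ha.mul (Real.hasDerivAt_log hy.ne')).congr_deriv (by simp)
    have h2 : HasDerivAt (fun y : ℝ => (y-1)*(5*y+1)) ((5*y+1) + (y-1)*5) y := by
      have := ((hasDerivAt_id y).sub_const 1).mul (((hasDerivAt_id y).const_mul 5).add_const 1)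
      exact this.congr_deriv (by simp <;> ring)
    have := h1.sub h2
    refine this.congr_deriv ?_
    have hy0 : y ≠ 0 := hy.ne'
    field_simp
    ring
  have hcont : ContinuousOn h (Set.Ioi 0) := by
    intro y hy
    exact ((hderiv y hy).differentiableAt.continuousAt).continuousWithinAt
  have hge : 0 ≤ h x := by
    rcases le_or_gt 1 x with h1x | h1x
    · -- h monotone on [1,∞)
      have hmono : MonotoneOn h (Set.Ici 1) := by
        apply monotoneOn_of_deriv_nonneg (convex_Ici 1)
          (hcont.mono (fun y hy => Set.mem_Ioi.2 (lt_of_lt_of_le zero_lt_one (Set.mem_Ici.1 hy))))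
        · intro y hy
          rw [interior_Ici] at hy
          exact (hderiv y (lt_trans zero_lt_one hy)).differentiableAt.differentiableWithinAt
        · intro y hy
          rw [interior_Ici] at hy
          rw [(hderiv y (lt_trans zero_lt_one hy)).deriv]
          have := my_g_mono (Set.mem_Ioi.2 zero_lt_one) (Set.mem_Ioi.2 (lt_trans zero_lt_one hy)) hy.le
          simp only at this
          rw [hg1] at this
          linarith
      have := hmono (Set.mem_Ici.2 le_rfl) (Set.mem_Ici.2 h1x) h1x
      simpa [hh] using this
    · -- h antitone on (0,1]
      have hmono : AntitoneOn h (Set.Ioc 0 1) := by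
        apply antitoneOn_of_deriv_nonpos (convex_Ioc 0 1)
          (hcont.mono (fun y hy => hy.1))
        · intro y hy
          rw [interior_Ioc] at hy
          exact (hderiv y hy.1).differentiableAt.differentiableWithinAt
        · intro y hy
          rw [interior_Ioc] at hy
          rw [(hderiv y hy.1).deriv]
          have := my_g_mono (Set.mem_Ioi.2 hy.1) (Set.mem_Ioi.2 zero_lt_one) hy.2.le
          simp only at this
          rw [hg1] at this
          linarith
      have := hmono (Set.mem_Ioc.2 ⟨hx, h1x.le⟩) (Set.mem_Ioc.2 ⟨zero_lt_one, le_rfl⟩) h1x.le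
      simpa [hh] using this
  simp only [hh] at hge
  linarith

lemma my_pointwise {a b : ℝ} (ha : 0 ≤ a) (hb : 0 ≤ b) (hab : b = 0 → a = 0) :
    (a - b)^2 ≤ (2*a + 4*b)/3 * (a * Real.log (a/b) - a + b) := by
  rcases eq_or_lt_of_le hb with hb0 | hb0
  · rw [← hb0, hab hb0.symm]; simp
  rcases eq_or_lt_of_le ha with ha0 | ha0
  · rw [← ha0]; simp; nlinarith
  · have hkey := my_key_log (x := a/b) (by positivity)
    have hb' : b ≠ 0 := hb0.ne'
    have h2 : (a - b) * (5*a + b) ≤ 2*a*(a+2*b) * Real.log (a/b) := by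
      have hm := mul_le_mul_of_nonneg_left hkey (sq_nonneg b)
      have e1 : b^2 * ((a/b - 1) * (5*(a/b) + 1)) = (a - b) * (5*a + b) := by
        field_simp
      have e2 : b^2 * (2*(a/b)*(a/b+2) * Real.log (a/b)) = 2*a*(a+2*b) * Real.log (a/b) := by
        field_simp
      linarith [e1 ▸ e2 ▸ hm]
    nlinarith [h2]

lemma my_phi_nonneg {a b : ℝ} (ha : 0 ≤ a) (hb : 0 ≤ b) (hab : b = 0 → a = 0) :
    0 ≤ a * Real.log (a/b) - a + b := by
  rcases eq_or_lt_of_le ha with ha0 | ha0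
  · rw [← ha0]; simpa using hb
  rcases eq_or_lt_of_le hb with hb0 | hb0
  · exact absurd (hab hb0.symm) ha0.ne'
  have hlog : 1 - b/a ≤ Real.log (a/b) := by
    have := Real.log_le_sub_one_of_pos (x := b/a) (by positivity)
    have h2 : Real.log (a/b) = - Real.log (b/a) := by
      rw [← Real.log_inv, inv_div]
    rw [h2]; linarith
  nlinarith [mul_le_mul_of_nonneg_left hlog ha0.le, mul_div_cancel₀ b ha0.ne']




/-- Pinsker-type bound via the Kullback–Leibler divergence: for pmfs `p, p_r`
on a finite set with `p` absolutely continuous w.r.t. `p_r`, and any nonnegative `X`,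
`∑_s |p(s) - p_r(s)| X(s) ≤ sqrt(d_KL(p, p_r)) * sqrt((4/3) E_{p_r}[X²] + (2/3) E_p[X²])`. -/
theorem stmt13 {α : Type*} [Fintype α]
    (p pr : α → ℝ) (X : α → ℝ)
    (hp : ∀ s, 0 ≤ p s) (hpr : ∀ s, 0 ≤ pr s)
    (hps : ∑ s : α, p s = 1) (hprs : ∑ s : α, pr s = 1)
    (habs : ∀ s, pr s = 0 → p s = 0)
    (hX : ∀ s, 0 ≤ X s) :
    ∑ s : α, |p s - pr s| * X s
      ≤ Real.sqrt (∑ s : α, p s * Real.log (p s / pr s))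
        * Real.sqrt ((4 / 3) * (∑ s : α, pr s * X s ^ 2)
            + (2 / 3) * (∑ s : α, p s * X s ^ 2)) := by
  set φ : α → ℝ := fun s => p s * Real.log (p s / pr s) - p s + pr s with hφ
  set w : α → ℝ := fun s => (2 * p s + 4 * pr s) / 3 with hw
  have hφ0 : ∀ s, 0 ≤ φ s := fun s => my_phi_nonneg (hp s) (hpr s) (habs s)
  have hw0 : ∀ s, 0 ≤ w s := fun s => by have := hp s; have := hpr s; positivity
  -- pointwise bound
  have hpt : ∀ s, |p s - pr s| * X s ≤ Real.sqrt (φ s) * (Real.sqrt (w s) * X s) := by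
    intro s
    have h1 : |p s - pr s| ≤ Real.sqrt (φ s) * Real.sqrt (w s) := by
      rw [← Real.sqrt_mul (hφ0 s), ← Real.sqrt_sq_eq_abs]
      apply Real.sqrt_le_sqrt
      have := my_pointwise (hp s) (hpr s) (habs s)
      rw [hφ, hw]; nlinarith [this]
    calc |p s - pr s| * X s ≤ (Real.sqrt (φ s) * Real.sqrt (w s)) * X s :=
          mul_le_mul_of_nonneg_right h1 (hX s)
      _ = Real.sqrt (φ s) * (Real.sqrt (w s) * X s) := by ring
  have hstep1 : ∑ s : α, |p s - pr s| * X s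
      ≤ ∑ s : α, Real.sqrt (φ s) * (Real.sqrt (w s) * X s) :=
    Finset.sum_le_sum (fun s _ => hpt s)
  -- Cauchy–Schwarz
  have hCS : ∑ s : α, Real.sqrt (φ s) * (Real.sqrt (w s) * X s)
      ≤ Real.sqrt (∑ s : α, φ s) * Real.sqrt (∑ s : α, w s * X s ^ 2) := by
    have h := Finset.sum_mul_sq_le_sq_mul_sq Finset.univ
      (fun s => Real.sqrt (φ s)) (fun s => Real.sqrt (w s) * X s)
    have hsq : ∀ s : α, (Real.sqrt (φ s))^2 = φ s := fun s => Real.sq_sqrt (hφ0 s)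
    have hsq2 : ∀ s : α, (Real.sqrt (w s) * X s)^2 = w s * X s ^ 2 := by
      intro s; rw [mul_pow, Real.sq_sqrt (hw0 s)]
    simp only [hsq, hsq2] at h
    have hnn : 0 ≤ ∑ s : α, Real.sqrt (φ s) * (Real.sqrt (w s) * X s) :=
      Finset.sum_nonneg fun s _ => mul_nonneg (Real.sqrt_nonneg _) (mul_nonneg (Real.sqrt_nonneg _) (hX s))
    calc ∑ s : α, Real.sqrt (φ s) * (Real.sqrt (w s) * X s)
        = Real.sqrt ((∑ s : α, Real.sqrt (φ s) * (Real.sqrt (w s) * X s))^2) :=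
          (Real.sqrt_sq hnn).symm
      _ ≤ Real.sqrt ((∑ s : α, φ s) * ∑ s : α, w s * X s ^ 2) := Real.sqrt_le_sqrt h
      _ = _ := Real.sqrt_mul (Finset.sum_nonneg fun s _ => hφ0 s) _
  -- identify the sums
  have hsumφ : ∑ s : α, φ s = ∑ s : α, p s * Real.log (p s / pr s) := by
    simp only [hφ, Finset.sum_add_distrib, Finset.sum_sub_distrib, hps, hprs]
    ring
  have hsumw : ∑ s : α, w s * X s ^ 2
      = (4 / 3) * (∑ s : α, pr s * X s ^ 2) + (2 / 3) * (∑ s : α, p s * X s ^ 2) := by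
    rw [Finset.mul_sum, Finset.mul_sum, ← Finset.sum_add_distrib]
    exact Finset.sum_congr rfl fun s _ => by rw [hw]; ring
  rw [hsumφ, hsumw] at hCS
  exact hstep1.trans hCS
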